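/- Let c > 1 and ε > 0. The function G(w) = c w + ε/w − conj(w) has exactly two zeros, namely w = ± i (ε/(1+c))^{1/2}, and at both zeros the analytic part R_G(w) = cw + ε/w satisfies |R_G'(w)| > 1 (i.e., both zeros are sense-preserving). -/

import Mathlib

theorem two_sense_preserving_zeros (c ε : ℝ) (hc : 1 < c) (hε : 0 < ε) :
    (∀ w : ℂ, w ≠ 0 →
      ((c : ℂ) * w + (ε : ℂ) / w - (starRingEnd ℂ) w = 0 ↔
        w = Complex.I * (Real.sqrt (ε / (1 + c)) : ℂ) ∨
        w = -(Complex.I * (Real.sqrt (ε / (1 + c)) : ℂ)))) ∧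
    ∀ w : ℂ, w ≠ 0 → (c : ℂ) * w + (ε : ℂ) / w - (starRingEnd ℂ) w = 0 →
      1 < ‖(c : ℂ) - (ε : ℂ) / w ^ 2‖ := by
  have hc1 : (0:ℝ) < 1 + c := by linarith
  set s := Real.sqrt (ε / (1 + c)) with hsdef
  have hs2 : s ^ 2 = ε / (1 + c) := Real.sq_sqrt (by positivity)
  have hs : 0 < s := Real.sqrt_pos.mpr (by positivity)
  have hse : (1 + c) * s ^ 2 = ε := by
    rw [hs2]; field_simp
  have key : ∀ w : ℂ, w ≠ 0 →
      ((c : ℂ) * w + (ε : ℂ) / w - (starRingEnd ℂ) w = 0 ↔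
        w = Complex.I * (s : ℂ) ∨ w = -(Complex.I * (s : ℂ))) := by
    intro w hw
    constructor
    · intro h
      have h' : (c : ℂ) * w ^ 2 + ε - (starRingEnd ℂ) w * w = 0 := by
        have := congrArg (· * w) h
        field_simp at this
        linear_combination this
      set x := w.re with hx
      set y := w.im with hy
      have him : c * (x * y + y * x) - (x * y + -(y * x)) = 0 := by
        have := congrArg Complex.im h'
        simpa [Complex.ext_iff, pow_two, Complex.mul_im, Complex.mul_re,
          Complex.conj_re, Complex.conj_im] using this
      have hre : c * (x * x - y * y) + ε - (x * x + y * y) = 0 := by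
        have := congrArg Complex.re h'
        simpa [Complex.ext_iff, pow_two, Complex.mul_im, Complex.mul_re,
          Complex.conj_re, Complex.conj_im] using this
      have hxy : x * y = 0 := by
        have hc0 : (0:ℝ) < c := by linarith
        nlinarith
      have hx0 : x = 0 := by
        rcases mul_eq_zero.mp hxy with h0 | h0
        · exact h0
        · exfalso; rw [h0] at hre; nlinarith
      have hy2 : y ^ 2 = s ^ 2 := by
        rw [hs2]; rw [hx0] at hre; field_simp; nlinarith
      have : y = s ∨ y = -s := sq_eq_sq_iff_eq_or_eq_neg.mp hy2
      rcases this with h0 | h0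
      · left
        apply Complex.ext <;> simp [← hx, ← hy, hx0, h0]
      · right
        apply Complex.ext <;> simp [← hx, ← hy, hx0, h0]
    · intro h
      have hsne : (s : ℂ) ≠ 0 := by
        exact_mod_cast ne_of_gt (show (0:ℝ) < s from hs)
      rcases h with rfl | rfl
      · have hε' : (ε:ℂ) = (1+c)*(s:ℂ)^2 := by exact_mod_cast hse.symm
        rw [hε']
        field_simp
        simp [Complex.conj_ofReal]
        ring_nf
        simp [Complex.I_sq]
      · have hε' : (ε:ℂ) = (1+c)*(s:ℂ)^2 := by exact_mod_cast hse.symm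
        rw [hε']
        field_simp
        simp [Complex.conj_ofReal]
        ring_nf
        simp [Complex.I_sq]
  refine ⟨key, fun w hw h => ?_⟩
  have hw2 : w ^ 2 = -((s:ℂ)^2) := by
    rcases (key w hw).mp h with rfl | rfl <;> ring_nf <;>
      simp [Complex.I_sq]
  have hsne : ((s:ℂ)^2) ≠ 0 := pow_ne_zero 2 (Complex.ofReal_ne_zero.mpr hs.ne')
  have hεc : ((ε:ℝ):ℂ) = ((1+c:ℝ):ℂ) * ((s:ℝ):ℂ)^2 := by
    exact_mod_cast congrArg (Complex.ofReal) hse.symm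
  have h1 : (ε : ℂ) / w ^ 2 = -(((1+c:ℝ)):ℂ) := by
    rw [hw2, hεc]
    rw [div_neg, mul_div_assoc, div_self hsne, mul_one]
  have h2 : (c : ℂ) - (ε : ℂ) / w ^ 2 = ((1 + 2*c : ℝ) : ℂ) := by
    rw [h1]; push_cast; ring
  rw [h2, Complex.norm_real, Real.norm_eq_abs]
  rw [abs_of_pos (by linarith)]
  linarith
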